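/- In the decoding of an ICSIE with generator matrix G: let H^{(i)} be a matrix whose row space is the orthogonal complement of span({G_j}_{j ∈ {f(i)} ∪ Y_i}), and let s_i = H^{(i)} (x̃_{δ_s} G_{X_i})^T where x̃_{δ_s} = x_{X_i} − x̂_{X_i} has weight at most δ_s. If p_i is any vector in the row span of at most δ_s rows of G_{X_i} satisfying H^{(i)} p_i^T = s_i, then p_i = x̃_{δ_s} G_{X_i} + k for some k ∈ span({G_j}_{j ∈ Y_i}). -/

import Mathlib

/-- Syndrome decoding of the ICSIE: any solution `p` of the
syndrome equation that is a combination of at most `δs` rows of `G_{X_i}`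
equals `x̃ G_{X_i} + k` with `k ∈ span{G_j : j ∈ Y_i}`. -/
theorem stmt5 {F : Type} [Field F] [DecidableEq F]
    {n N m L : ℕ} (δs : ℕ)
    (X : Fin m → Finset (Fin n)) (f : Fin m → Fin n)
    (hf : ∀ i, f i ∉ X i)
    (G : Matrix (Fin n) (Fin N) F)
    (hvalid : ∀ z : Fin n → F,
      (∃ i : Fin m, z (f i) ≠ 0 ∧
        ((X i).filter (fun j => z j ≠ 0)).card ≤ 2 * δs) →
      Matrix.vecMul z G ≠ 0)
    (i : Fin m)
    (H : Matrix (Fin L) (Fin N) F)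
    -- the row space of `H` is the orthogonal complement of
    -- `span{G_j : j ∈ {f i} ∪ Y_i}` with respect to the dot product
    (hH : ∀ u : Fin N → F,
      u ∈ Submodule.span F (Set.range fun r : Fin L => H r) ↔
        ∀ w ∈ Submodule.span F
          ((fun j : Fin n => G j) '' {j | j = f i ∨ (j ∉ X i ∧ j ≠ f i)}),
          dotProduct w u = 0)
    -- `e` is the side information error vector `x̃_{δs}` (supported on `X i`,
    -- of weight at most `δs`), so that `x̃_{δs} G_{X_i} = e ⬝ G`
    (e : Fin n → F) (he0 : ∀ j, j ∉ X i → e j = 0)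
    (hecard : ((X i).filter (fun j => e j ≠ 0)).card ≤ δs)
    -- `p` is a combination of at most `δs` rows of `G_{X_i}`
    (p : Fin N → F) (c : Fin n → F) (hpc : p = Matrix.vecMul c G)
    (hc0 : ∀ j, j ∉ X i → c j = 0)
    (hccard : ((X i).filter (fun j => c j ≠ 0)).card ≤ δs)
    -- `p` satisfies the syndrome equation `H pᵀ = s_i = H (x̃ G_{X_i})ᵀ`
    (hsyn : H.mulVec p = H.mulVec (Matrix.vecMul e G)) :
    ∃ k ∈ Submodule.span F
        ((fun j : Fin n => G j) '' {j | j ∉ X i ∧ j ≠ f i}),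
      p = Matrix.vecMul e G + k := by

  classical
  -- the dot-product bilinear form
  set B : LinearMap.BilinForm F (Fin N → F) := Matrix.toBilin' 1 with hB
  have hBapp : ∀ v w : Fin N → F, B v w = dotProduct v w := by
    intro v w
    simp [hB, Matrix.toBilin'_apply', Matrix.one_mulVec]
  have hBnd : B.Nondegenerate := by
    rw [hB, Matrix.nondegenerate_toBilin'_iff]
    exact Matrix.nondegenerate_of_det_ne_zero (by simp)
  have hBrefl : B.IsRefl := by
    intro v w h
    rw [hBapp] at h ⊢
    rwa [dotProduct_comm]
  set W : Submodule F (Fin N → F) := Submodule.span F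
      ((fun j : Fin n => G j) '' {j | j = f i ∨ (j ∉ X i ∧ j ≠ f i)}) with hW
  -- the row space of H equals the B-orthogonal of W
  have hrows : Submodule.span F (Set.range fun r : Fin L => H r) = B.orthogonal W := by
    ext u
    rw [hH u, LinearMap.BilinForm.mem_orthogonal_iff]
    constructor
    · intro h w hw
      have := h w hw
      rwa [hBapp]
    · intro h w hw
      have := h w hw
      rwa [hBapp] at this
  -- v = p - e⬝G lies in the double orthogonal of W, hence in W
  set v : Fin N → F := p - Matrix.vecMul e G with hv
  have hHv : H.mulVec v = 0 := by
    rw [hv, Matrix.mulVec_sub, hsyn, sub_self]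
  have hvW : v ∈ W := by
    rw [← LinearMap.BilinForm.orthogonal_orthogonal hBnd hBrefl W]
    rw [LinearMap.BilinForm.mem_orthogonal_iff]
    intro u hu
    rw [← hrows] at hu
    rw [hBapp]
    induction hu using Submodule.span_induction with
    | mem x hx =>
      obtain ⟨r, rfl⟩ := hx
      have := congrFun hHv r
      simpa [Matrix.mulVec, Pi.zero_apply] using this
    | zero => simp
    | add x y _ _ hx hy => rw [add_dotProduct, hx, hy, add_zero]
    | smul a x _ hx => rw [smul_dotProduct, hx, smul_zero]
  -- split off the `f i` component
  have hset : {j : Fin n | j = f i ∨ (j ∉ X i ∧ j ≠ f i)}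
      = insert (f i) {j : Fin n | j ∉ X i ∧ j ≠ f i} := by
    ext j; simp [Set.mem_insert_iff]
  rw [hW, hset, Set.image_insert_eq, Submodule.mem_span_insert] at hvW
  obtain ⟨a, y, hy, hvay⟩ := hvW
  rw [Finsupp.mem_span_image_iff_linearCombination] at hy
  obtain ⟨l, hl, hly⟩ := hy
  -- y = l ⬝ G
  have hyG : y = Matrix.vecMul (⇑l) G := by
    rw [← hly, Finsupp.linearCombination_apply, Finsupp.sum]
    ext k
    rw [Matrix.vecMul, dotProduct]
    rw [Finset.sum_apply]
    rw [← Finset.sum_subset (Finset.subset_univ l.support)]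
    · exact Finset.sum_congr rfl fun j _ => rfl
    · intro j _ hj
      simp [Finsupp.notMem_support_iff.mp hj]
  -- the cancelling vector z
  set z : Fin n → F := (c - e) - a • (Pi.single (f i) (1:F) : Fin n → F) - ⇑l with hz
  have hl0 : ∀ j : Fin n, j ∈ X i ∨ j = f i → l j = 0 := by
    intro j hj
    by_contra h
    have := hl (Finsupp.mem_support_iff.mpr h)
    simp only [Set.mem_setOf_eq] at this
    rcases hj with hj | hj
    · exact this.1 hj
    · exact this.2 hj
  have hzG : Matrix.vecMul z G = 0 := by
    have : Matrix.vecMul (c - e) G = v := by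
      rw [hv, hpc, Matrix.sub_vecMul]
    rw [hz, Matrix.sub_vecMul, Matrix.sub_vecMul, this, hvay, hyG]
    have h1 : Matrix.vecMul (a • (Pi.single (f i) (1:F) : Fin n → F)) G = a • G (f i) := by
      rw [Matrix.smul_vecMul]
      congr 1
      ext k
      simp [Matrix.single_vecMul]
    rw [h1]
    abel
  -- coefficient a must vanish
  have ha : a = 0 := by
    by_contra ha
    refine hvalid z ⟨i, ?_, ?_⟩ hzG
    · have h1 : c (f i) = 0 := hc0 _ (hf i)
      have h2 : e (f i) = 0 := he0 _ (hf i)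
      have h3 : l (f i) = 0 := hl0 _ (Or.inr rfl)
      simp [hz, h1, h2, h3, ha]
    · have hsub : (X i).filter (fun j => z j ≠ 0) ⊆
          (X i).filter (fun j => c j ≠ 0) ∪ (X i).filter (fun j => e j ≠ 0) := by
        intro j hj
        rw [Finset.mem_filter] at hj
        obtain ⟨hjX, hjz⟩ := hj
        have hls : l j = 0 := hl0 _ (Or.inl hjX)
        have hjf : j ≠ f i := fun h => hf i (h ▸ hjX)
        have hsingle : (Pi.single (f i) (1:F) : Fin n → F) j = 0 := Pi.single_eq_of_ne hjf 1
        have : c j - e j ≠ 0 := by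
          intro h
          apply hjz
          simp [hz, h, hls, hsingle]
        rcases ne_or_eq (c j) 0 with h | h
        · exact Finset.mem_union_left _ (Finset.mem_filter.mpr ⟨hjX, h⟩)
        · refine Finset.mem_union_right _ (Finset.mem_filter.mpr ⟨hjX, ?_⟩)
          intro h2
          exact this (by rw [h, h2, sub_zero])
      calc ((X i).filter (fun j => z j ≠ 0)).card
          ≤ ((X i).filter (fun j => c j ≠ 0) ∪ (X i).filter (fun j => e j ≠ 0)).card :=
            Finset.card_le_card hsub
        _ ≤ ((X i).filter (fun j => c j ≠ 0)).card + ((X i).filter (fun j => e j ≠ 0)).card :=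
            Finset.card_union_le _ _
        _ ≤ 2 * δs := by omega
  -- conclude
  refine ⟨v, ?_, by rw [hv]; ring⟩
  have : v = y := by rw [hvay, ha, zero_smul, zero_add]
  rw [this, hyG]
  rw [Finsupp.mem_span_image_iff_linearCombination]
  exact ⟨l, hl, by rw [hly, hyG]⟩
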